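/- For every natural number k and every complex z which is not a nonpositive integer, the k-th derivative of the reciprocal Gamma function satisfies (1/Γ)^{(k)}(z) = (1/Γ(z)) · B_k(−ψ^{(0)}(z), −ψ^{(1)}(z), …, −ψ^{(k−1)}(z)), where B_k is the k-th complete Bell polynomial and ψ^{(j)} denotes the j-th polygamma function. -/

import Mathlib

open Finset

/-- The complete Bell polynomials, evaluated on a sequence `x : ℕ → ℂ` (indexed from 1). -/
noncomputable def bellPoly : ℕ → (ℕ → ℂ) → ℂ
  | 0, _ => 1
  | (n + 1), x => ∑ k ∈ Finset.range (n + 1),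
      (n.choose k : ℂ) * bellPoly (n - k) x * x (k + 1)
  termination_by n _ => n
  decreasing_by omega

/-- The digamma function `ψ⁽⁰⁾(z) = Γ'(z)/Γ(z)`. -/
noncomputable def digamma (z : ℂ) : ℂ := deriv Complex.Gamma z / Complex.Gamma z

/-- The polygamma functions `ψ⁽ʲ⁾ = (d/dz)ʲ ψ⁽⁰⁾`. -/
noncomputable def polygamma (j : ℕ) (z : ℂ) : ℂ := iteratedDeriv j digamma z

/-- The set of non-poles of `Γ`. -/
def Uset : Set ℂ := {z : ℂ | ∀ n : ℕ, z ≠ -n}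

lemma isOpen_Uset : IsOpen Uset := by
  have h1 : Uset = ((((↑) : ℤ → ℂ) '' (Set.Iic 0))ᶜ : Set ℂ) := by
    ext z
    simp only [Uset, Set.mem_compl_iff, Set.mem_image, Set.mem_setOf_eq, Set.mem_Iic]
    constructor
    · rintro h ⟨m, hm0, rfl⟩
      apply h (-m).toNat
      have h2 : ((((-m).toNat : ℕ)) : ℂ) = ((-m : ℤ) : ℂ) := by
        rw [← Int.cast_natCast, Int.toNat_of_nonneg (by omega)]
      rw [h2]; push_cast; ring
    · intro h n hn
      exact h ⟨-(n : ℤ), by omega, by push_cast; exact hn.symm⟩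
  rw [h1]
  exact (Complex.closedEmbedding_intCast.isClosedMap _ isClosed_Iic).isOpen_compl

lemma gammaAnalytic : AnalyticOnNhd ℂ Complex.Gamma Uset :=
  DifferentiableOn.analyticOnNhd
    (fun z hz => (Complex.differentiableAt_Gamma z hz).differentiableWithinAt) isOpen_Uset

lemma digammaAnalytic : AnalyticOnNhd ℂ digamma Uset := fun z hz =>
  ((gammaAnalytic.deriv z hz).div (gammaAnalytic z hz) (Complex.Gamma_ne_zero hz))

lemma analytic_iteratedDeriv {h : ℂ → ℂ} (hh : AnalyticOnNhd ℂ h Uset) (m : ℕ) :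
    AnalyticOnNhd ℂ (iteratedDeriv m h) Uset := by
  induction m with
  | zero => simpa [iteratedDeriv_zero] using hh
  | succ m ih => rw [iteratedDeriv_succ]; exact ih.deriv

lemma invGammaAnalytic : AnalyticOnNhd ℂ (fun w => (Complex.Gamma w)⁻¹) Uset := fun z hz =>
  (gammaAnalytic z hz).inv (Complex.Gamma_ne_zero hz)

lemma deriv_inv_Gamma {z : ℂ} (hz : z ∈ Uset) :
    deriv (fun w => (Complex.Gamma w)⁻¹) z = (Complex.Gamma z)⁻¹ * (-digamma z) := by
  have hd : DifferentiableAt ℂ Complex.Gamma z := Complex.differentiableAt_Gamma z hz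
  have hne := Complex.Gamma_ne_zero hz
  rw [deriv_fun_inv'' hd hne, digamma, mul_neg, neg_div]
  congr 1
  rw [eq_comm, inv_mul_eq_div, div_div, sq]

/-- Pascal-triangle rearrangement used in the inductive step of the Leibniz formula. -/
lemma pascal_sum (n : ℕ) (a b : ℕ → ℂ) :
    ∑ k ∈ range (n + 1), (n.choose k : ℂ) * (a (k + 1) * b (n - k) + a k * b (n - k + 1))
      = ∑ k ∈ range (n + 2), ((n + 1).choose k : ℂ) * (a k * b (n + 1 - k)) := by
  have hRHS : ∑ k ∈ range (n + 2), ((n + 1).choose k : ℂ) * (a k * b (n + 1 - k))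
      = (∑ k ∈ range (n + 1), ((n.choose k : ℂ) + (n.choose (k + 1) : ℂ)) *
          (a (k + 1) * b (n - k))) + a 0 * b (n + 1) := by
    rw [Finset.sum_range_succ']
    congr 1
    · apply Finset.sum_congr rfl
      intro k hk
      have h1 : n + 1 - (k + 1) = n - k := by omega
      rw [h1, Nat.choose_succ_succ]
      push_cast
      ring
    · simp
  rw [hRHS]
  have hsplit : ∑ k ∈ range (n + 1), ((n.choose k : ℂ) + (n.choose (k + 1) : ℂ)) *
      (a (k + 1) * b (n - k))
      = (∑ k ∈ range (n + 1), (n.choose k : ℂ) * (a (k + 1) * b (n - k)))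
        + ∑ k ∈ range (n + 1), (n.choose (k + 1) : ℂ) * (a (k + 1) * b (n - k)) := by
    rw [← Finset.sum_add_distrib]
    apply Finset.sum_congr rfl
    intro k _
    ring
  rw [hsplit]
  have hLHS : ∑ k ∈ range (n + 1), (n.choose k : ℂ) * (a (k + 1) * b (n - k) + a k * b (n - k + 1))
      = (∑ k ∈ range (n + 1), (n.choose k : ℂ) * (a (k + 1) * b (n - k)))
        + ∑ k ∈ range (n + 1), (n.choose k : ℂ) * (a k * b (n - k + 1)) := by
    rw [← Finset.sum_add_distrib]
    apply Finset.sum_congr rfl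
    intro k _
    ring
  rw [hLHS, add_assoc]
  congr 1
  -- remains : ∑ C(n,k) a k b (n-k+1) = ∑ C(n,k+1) a (k+1) b (n-k) + a 0 b (n+1)
  rw [Finset.sum_range_succ' (fun k => (n.choose k : ℂ) * (a k * b (n - k + 1))) n]
  rw [Finset.sum_range_succ (fun k => (n.choose (k + 1) : ℂ) * (a (k + 1) * b (n - k)))]
  have h0 : (n.choose (n + 1) : ℂ) = 0 := by
    norm_cast
    exact Nat.choose_eq_zero_of_lt (by omega)
  rw [h0]
  simp only [Nat.choose_zero_right, Nat.cast_one, one_mul, Nat.sub_zero, zero_mul, add_zero]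
  congr 1
  apply Finset.sum_congr rfl
  intro k hk
  simp only [Finset.mem_range] at hk
  have : n - (k + 1) + 1 = n - k := by omega
  rw [this]

/-- Leibniz formula for iterated derivatives of a product of analytic functions. -/
lemma leibniz {f g : ℂ → ℂ} (hf : AnalyticOnNhd ℂ f Uset) (hg : AnalyticOnNhd ℂ g Uset) :
    ∀ n : ℕ, ∀ z ∈ Uset, iteratedDeriv n (fun w => f w * g w) z
      = ∑ k ∈ range (n + 1), (n.choose k : ℂ) *
          (iteratedDeriv k f z * iteratedDeriv (n - k) g z) := by
  intro n
  induction n with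
  | zero => intro z _; simp
  | succ n ih =>
    intro z hz
    rw [iteratedDeriv_succ]
    have hev : iteratedDeriv n (fun w => f w * g w) =ᶠ[nhds z]
        fun w => ∑ k ∈ range (n + 1), (n.choose k : ℂ) *
          (iteratedDeriv k f w * iteratedDeriv (n - k) g w) := by
      filter_upwards [isOpen_Uset.mem_nhds hz] with w hw using ih w hw
    rw [hev.deriv_eq]
    have hDF : ∀ m : ℕ, HasDerivAt (iteratedDeriv m f) (iteratedDeriv (m + 1) f z) z := by
      intro m
      have h1 := ((analytic_iteratedDeriv hf m) z hz).differentiableAt.hasDerivAt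
      rwa [iteratedDeriv_succ]
    have hDG : ∀ m : ℕ, HasDerivAt (iteratedDeriv m g) (iteratedDeriv (m + 1) g z) z := by
      intro m
      have h1 := ((analytic_iteratedDeriv hg m) z hz).differentiableAt.hasDerivAt
      rwa [iteratedDeriv_succ]
    have hsum : HasDerivAt (fun w => ∑ k ∈ range (n + 1), (n.choose k : ℂ) *
          (iteratedDeriv k f w * iteratedDeriv (n - k) g w))
        (∑ k ∈ range (n + 1), (n.choose k : ℂ) *
          (iteratedDeriv (k + 1) f z * iteratedDeriv (n - k) g z
            + iteratedDeriv k f z * iteratedDeriv (n - k + 1) g z)) z := by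
      apply HasDerivAt.fun_sum
      intro k _
      exact ((hDF k).mul (hDG (n - k))).const_mul _
    rw [hsum.deriv]
    exact pascal_sum n (fun m => iteratedDeriv m f z) (fun m => iteratedDeriv m g z)

lemma polygamma_eq_iteratedDeriv_neg (m : ℕ) (z : ℂ) :
    iteratedDeriv m (fun w => -digamma w) z = -polygamma m z := by
  rw [iteratedDeriv_fun_neg]
  rfl

lemma main_aux : ∀ k : ℕ, ∀ z ∈ Uset,
    iteratedDeriv k (fun w => (Complex.Gamma w)⁻¹) z =
      (Complex.Gamma z)⁻¹ * bellPoly k (fun j => -polygamma (j - 1) z) := by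
  intro k
  induction k using Nat.strong_induction_on with
  | _ k ih =>
    obtain _ | n := k
    · intro z _; simp [bellPoly]
    · intro z hz
      rw [iteratedDeriv_succ']
      have hev : deriv (fun w => (Complex.Gamma w)⁻¹) =ᶠ[nhds z]
          fun w => (Complex.Gamma w)⁻¹ * (-digamma w) := by
        filter_upwards [isOpen_Uset.mem_nhds hz] with w hw using deriv_inv_Gamma hw
      rw [hev.iteratedDeriv_eq n]
      have hnd : AnalyticOnNhd ℂ (fun w => -digamma w) Uset := fun w hw =>
        (digammaAnalytic w hw).neg
      rw [leibniz invGammaAnalytic hnd n z hz]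
      set x : ℕ → ℂ := fun j => -polygamma (j - 1) z with hx
      have hterm : ∀ m ∈ range (n + 1), (n.choose m : ℂ) *
            (iteratedDeriv m (fun w => (Complex.Gamma w)⁻¹) z
              * iteratedDeriv (n - m) (fun w => -digamma w) z)
          = (Complex.Gamma z)⁻¹ * ((n.choose m : ℂ) * bellPoly m x * x (n - m + 1)) := by
        intro m hm
        simp only [Finset.mem_range] at hm
        rw [ih m (by omega) z hz, polygamma_eq_iteratedDeriv_neg]
        have hxm : x (n - m + 1) = -polygamma (n - m) z := by
          rw [hx]; simp
        rw [hxm]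
        ring
      rw [Finset.sum_congr rfl hterm, ← Finset.mul_sum]
      congr 1
      rw [show bellPoly (n + 1) x
          = ∑ m ∈ range (n + 1), (n.choose m : ℂ) * bellPoly (n - m) x * x (m + 1)
        from by rw [bellPoly]]
      rw [← Finset.sum_range_reflect (fun m => (n.choose m : ℂ) * bellPoly (n - m) x * x (m + 1))]
      apply Finset.sum_congr rfl
      intro m hm
      simp only [Finset.mem_range] at hm
      have h1 : n + 1 - 1 - m = n - m := by omega
      have h2 : n - (n - m) = m := by omega
      rw [h1, h2, Nat.choose_symm (by omega)]

/-- For every `k ∈ ℕ` and `z ∉ ℤ_{≤0}`,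
`(1/Γ)^{(k)}(z) = (1/Γ(z)) · B_k(−ψ⁽⁰⁾(z), −ψ⁽¹⁾(z), …, −ψ⁽ᵏ⁻¹⁾(z))`. -/
theorem iteratedDeriv_one_div_Gamma (k : ℕ) (z : ℂ) (hz : ∀ n : ℕ, z ≠ -n) :
    iteratedDeriv k (fun w => (Complex.Gamma w)⁻¹) z =
      (Complex.Gamma z)⁻¹ * bellPoly k (fun j => -polygamma (j - 1) z) := by
  exact main_aux k z hz
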